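/- arXiv:1611.10164 — 2 statements merged into one kernel-verified Lean document; each statement's English description precedes it below -/
import Mathlib

section
/- Let P, Q₀ ∈ ℝ^{n×n} be symmetric with Q₀ positive semidefinite, R₀ ∈ ℝ^{m×m} symmetric positive definite, A ∈ ℝ^{n×n}, B ∈ ℝ^{n×m}, α ∈ (0,1). Suppose the block matrix S = [[−P + Q₀ + α AᵀPA, α AᵀPB],[α BᵀPA, R₀ + α BᵀPB]] is positive semidefinite and the block matrix Z = [[Z_{xx}, Z_{xu}],[Z_{xu}ᵀ, Z_{uu}]] is positive semidefinite with Z_{xx} positive definite, and Z·S = 0. Then −P + Q₀ + α AᵀPA − α² AᵀPB (R₀ + α BᵀPB)^{-1} BᵀPA = 0. -/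
open Matrix

theorem stmt_4 {n m : ℕ} (α : ℝ) (hα : α ∈ Set.Ioo (0:ℝ) 1)
    (P Q₀ A : Matrix (Fin n) (Fin n) ℝ) (B : Matrix (Fin n) (Fin m) ℝ)
    (R₀ : Matrix (Fin m) (Fin m) ℝ)
    (Zxx : Matrix (Fin n) (Fin n) ℝ) (Zxu : Matrix (Fin n) (Fin m) ℝ)
    (Zuu : Matrix (Fin m) (Fin m) ℝ)
    (hP : P.IsSymm) (hQ₀ : Q₀.PosSemidef) (hR₀ : R₀.PosDef)
    (hS : (Matrix.fromBlocks (-P + Q₀ + α • (Aᵀ * P * A)) (α • (Aᵀ * P * B))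
      (α • (Bᵀ * P * A)) (R₀ + α • (Bᵀ * P * B))).PosSemidef)
    (hZ : (Matrix.fromBlocks Zxx Zxu Zxuᵀ Zuu).PosSemidef)
    (hZxx : Zxx.PosDef)
    (hRinv : (R₀ + α • (Bᵀ * P * B)).PosDef)
    (hcs : (Matrix.fromBlocks Zxx Zxu Zxuᵀ Zuu) *
      (Matrix.fromBlocks (-P + Q₀ + α • (Aᵀ * P * A)) (α • (Aᵀ * P * B))
        (α • (Bᵀ * P * A)) (R₀ + α • (Bᵀ * P * B))) = 0) :
    -P + Q₀ + α • (Aᵀ * P * A) -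
      (α ^ 2) • (Aᵀ * P * B * (R₀ + α • (Bᵀ * P * B))⁻¹ * (Bᵀ * P * A)) = 0 := by
  set S11 := -P + Q₀ + α • (Aᵀ * P * A) with hS11
  set S12 := α • (Aᵀ * P * B) with hS12
  set S21 := α • (Bᵀ * P * A) with hS21
  set S22 := R₀ + α • (Bᵀ * P * B) with hS22
  rw [Matrix.fromBlocks_multiply] at hcs
  have h1 : Zxx * S11 + Zxu * S21 = 0 := by
    have := congrArg Matrix.toBlocks₁₁ hcs
    simpa [show (0 : Matrix (Fin n ⊕ Fin m) (Fin n ⊕ Fin m) ℝ).toBlocks₁₁ = 0 from rfl] using this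
  have h2 : Zxx * S12 + Zxu * S22 = 0 := by
    have := congrArg Matrix.toBlocks₁₂ hcs
    simpa [show (0 : Matrix (Fin n ⊕ Fin m) (Fin n ⊕ Fin m) ℝ).toBlocks₁₂ = 0 from rfl] using this
  have hS22u : IsUnit S22.det := isUnit_iff_ne_zero.mpr (ne_of_gt hRinv.det_pos)
  have hZxxu : IsUnit Zxx.det := isUnit_iff_ne_zero.mpr (ne_of_gt hZxx.det_pos)
  have hZxu : Zxu = -(Zxx * S12) * S22⁻¹ := by
    have h2' : Zxu * S22 = -(Zxx * S12) := by linear_combination (norm := noncomm_ring) h2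
    calc Zxu = Zxu * S22 * S22⁻¹ := (Matrix.mul_nonsing_inv_cancel_right _ _ hS22u).symm
      _ = -(Zxx * S12) * S22⁻¹ := by rw [h2']
  have key : Zxx * (S11 - S12 * S22⁻¹ * S21) = 0 := by
    have hz : Zxx * (S12 * S22⁻¹ * S21) = -(Zxu * S21) := by
      rw [hZxu]; simp [Matrix.mul_assoc]
    rw [Matrix.mul_sub, hz, sub_neg_eq_add]; exact h1
  have hfin : S11 - S12 * S22⁻¹ * S21 = 0 := by
    have := congrArg (fun M => Zxx⁻¹ * M) key
    simpa [← Matrix.mul_assoc, Matrix.nonsing_inv_mul _ hZxxu] using this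
  have : S12 * S22⁻¹ * S21 = (α ^ 2) • (Aᵀ * P * B * S22⁻¹ * (Bᵀ * P * A)) := by
    rw [hS12, hS21]
    simp [Matrix.smul_mul, Matrix.mul_smul, smul_smul, pow_two]
  rw [← this]
  exact hfin
end

section
/- Under the same hypotheses (S ⪰ 0, Z ⪰ 0, Z_{xx} ≻ 0, R₀ + α BᵀPB ≻ 0, and Z·S = 0), the feedback gain satisfies Z_{xu}ᵀ Z_{xx}^{-1} = −α (R₀ + α BᵀPB)^{-1} BᵀPA, and moreover Z_{uu} = Z_{xu}ᵀ Z_{xx}^{-1} Z_{xu}. -/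
open Matrix

theorem stmt_5 {n m : ℕ} (α : ℝ) (hα : α ∈ Set.Ioo (0:ℝ) 1)
    (P Q₀ A : Matrix (Fin n) (Fin n) ℝ) (B : Matrix (Fin n) (Fin m) ℝ)
    (R₀ : Matrix (Fin m) (Fin m) ℝ)
    (Zxx : Matrix (Fin n) (Fin n) ℝ) (Zxu : Matrix (Fin n) (Fin m) ℝ)
    (Zuu : Matrix (Fin m) (Fin m) ℝ)
    (hP : P.IsSymm) (hQ₀ : Q₀.PosSemidef) (hR₀ : R₀.PosDef)
    (hS : (Matrix.fromBlocks (-P + Q₀ + α • (Aᵀ * P * A)) (α • (Aᵀ * P * B))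
      (α • (Bᵀ * P * A)) (R₀ + α • (Bᵀ * P * B))).PosSemidef)
    (hZ : (Matrix.fromBlocks Zxx Zxu Zxuᵀ Zuu).PosSemidef)
    (hZxx : Zxx.PosDef)
    (hRinv : (R₀ + α • (Bᵀ * P * B)).PosDef)
    (hcs : (Matrix.fromBlocks Zxx Zxu Zxuᵀ Zuu) *
      (Matrix.fromBlocks (-P + Q₀ + α • (Aᵀ * P * A)) (α • (Aᵀ * P * B))
        (α • (Bᵀ * P * A)) (R₀ + α • (Bᵀ * P * B))) = 0) :
    Zxuᵀ * Zxx⁻¹ = -(α • ((R₀ + α • (Bᵀ * P * B))⁻¹ * (Bᵀ * P * A))) ∧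
      Zuu = Zxuᵀ * Zxx⁻¹ * Zxu := by
  set S12 : Matrix (Fin n) (Fin m) ℝ := α • (Aᵀ * P * B) with hS12
  set S22 : Matrix (Fin m) (Fin m) ℝ := R₀ + α • (Bᵀ * P * B) with hS22
  rw [Matrix.fromBlocks_multiply] at hcs
  -- extract blocks
  have h2 : Zxx * S12 + Zxu * S22 = 0 := by
    have := congrArg Matrix.toBlocks₁₂ hcs
    simp [Matrix.toBlocks₁₂, Matrix.fromBlocks] at this
    exact Matrix.ext fun i j => by simpa using congrFun (congrFun this i) j
  have h4 : Zxuᵀ * S12 + Zuu * S22 = 0 := by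
    have := congrArg Matrix.toBlocks₂₂ hcs
    simp [Matrix.toBlocks₂₂, Matrix.fromBlocks] at this
    exact Matrix.ext fun i j => by simpa using congrFun (congrFun this i) j
  -- invertibility
  have hS22det : IsUnit S22.det := isUnit_iff_ne_zero.2 hRinv.det_pos.ne'
  have hZxxdet : IsUnit Zxx.det := isUnit_iff_ne_zero.2 hZxx.det_pos.ne'
  -- symmetry facts
  have hS22symm : S22ᵀ = S22 := by
    rw [hS22, Matrix.transpose_add, Matrix.transpose_smul]
    congr 1
    · exact hR₀.isHermitian
    · congr 1
      rw [Matrix.transpose_mul, Matrix.transpose_mul, Matrix.transpose_transpose, hP.eq]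
      rw [Matrix.mul_assoc]
  have hS12T : S12ᵀ = α • (Bᵀ * P * A) := by
    rw [hS12, Matrix.transpose_smul, Matrix.transpose_mul, Matrix.transpose_mul,
      Matrix.transpose_transpose, hP.eq, Matrix.mul_assoc]
  have hZxxsymm : Zxxᵀ = Zxx := hZxx.isHermitian
  -- from h2 : Zxu * S22 = -(Zxx * S12)
  have h2' : Zxu = -(Zxx * S12) * S22⁻¹ := by
    have : Zxu * S22 = -(Zxx * S12) := by linear_combination (norm := noncomm_ring) h2
    calc Zxu = Zxu * S22 * S22⁻¹ := by
          rw [Matrix.mul_assoc, Matrix.mul_nonsing_inv _ hS22det, Matrix.mul_one]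
      _ = -(Zxx * S12) * S22⁻¹ := by rw [this]
  have hS22invsymm : (S22⁻¹)ᵀ = S22⁻¹ := by
    rw [Matrix.transpose_nonsing_inv, hS22symm]
  have key : Zxuᵀ * Zxx⁻¹ = -(S22⁻¹ * S12ᵀ) := by
    rw [h2', Matrix.transpose_mul, Matrix.transpose_neg, Matrix.transpose_mul, hS22invsymm,
      hZxxsymm]
    simp only [Matrix.mul_neg, Matrix.neg_mul, Matrix.mul_assoc,
      Matrix.mul_nonsing_inv _ hZxxdet, Matrix.mul_one]
  constructor
  · rw [key, hS12T, Matrix.mul_smul]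
  · -- S12 = -(Zxx⁻¹ * Zxu * S22)
    have hS12eq : S12 = -(Zxx⁻¹ * (Zxu * S22)) := by
      have : Zxx * S12 = -(Zxu * S22) := by linear_combination (norm := noncomm_ring) h2
      calc S12 = Zxx⁻¹ * (Zxx * S12) := by
            rw [← Matrix.mul_assoc, Matrix.nonsing_inv_mul _ hZxxdet, Matrix.one_mul]
        _ = -(Zxx⁻¹ * (Zxu * S22)) := by rw [this, Matrix.mul_neg]
    have h4' : Zuu * S22 = Zxuᵀ * Zxx⁻¹ * Zxu * S22 := by
      have : Zuu * S22 = -(Zxuᵀ * S12) := by linear_combination (norm := noncomm_ring) h4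
      rw [this, hS12eq, Matrix.mul_neg, neg_neg]
      simp only [Matrix.mul_assoc]
    calc Zuu = Zuu * S22 * S22⁻¹ := by
          rw [Matrix.mul_assoc, Matrix.mul_nonsing_inv _ hS22det, Matrix.mul_one]
      _ = Zxuᵀ * Zxx⁻¹ * Zxu * S22 * S22⁻¹ := by rw [h4']
      _ = Zxuᵀ * Zxx⁻¹ * Zxu := by
          rw [Matrix.mul_assoc, Matrix.mul_nonsing_inv _ hS22det, Matrix.mul_one]
end
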